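/- Let G = (V, E) be a finite directed graph with a distinguished vertex v and |V| = n. Build the data-graph G₀ with the same vertices and a single edge label 'down' on each edge of E, and constant data function D(z) = 0 (with Σ_n = ℕ). Then there exists a data function D' : V → ℕ such that the data-graph (V, E-with-down-labels, D') satisfies at v the node expression ⟨[=1]·down·[=2]·down·[=3]·…·down·[=n]⟩ if and only if G has a Hamiltonian path starting at v. -/

import Mathlib

/-- A data-graph: a set of nodes (natural numbers), a set of labeled directed edges,
and a data function assigning a data value to each node. -/
structure DataGraph (σe σn : Type) where
  V : Set ℕ
  E : Set (ℕ × σe × ℕ)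
  D : ℕ → σn

/- Syntax of the positive fragment of regular XPath (GXPath-pos): path expressions and
node expressions, without path complement or node negation. -/
mutual
inductive PathExpr (σe σn : Type) where
  | eps : PathExpr σe σn
  | label : σe → PathExpr σe σn
  | inv : σe → PathExpr σe σn
  | test : NodeExpr σe σn → PathExpr σe σn
  | concat : PathExpr σe σn → PathExpr σe σn → PathExpr σe σn
  | union : PathExpr σe σn → PathExpr σe σn → PathExpr σe σn
  | inter : PathExpr σe σn → PathExpr σe σn → PathExpr σe σn
  | star : PathExpr σe σn → PathExpr σe σn

inductive NodeExpr (σe σn : Type) where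
  | eq : σn → NodeExpr σe σn
  | ne : σn → NodeExpr σe σn
  | and : NodeExpr σe σn → NodeExpr σe σn → NodeExpr σe σn
  | or : NodeExpr σe σn → NodeExpr σe σn → NodeExpr σe σn
  | ex : PathExpr σe σn → NodeExpr σe σn
  | exEq : PathExpr σe σn → PathExpr σe σn → NodeExpr σe σn
  | exNe : PathExpr σe σn → PathExpr σe σn → NodeExpr σe σn
end

/- Semantics of GXPath-pos over a data-graph. -/
mutual
def pathSem {σe σn : Type} (G : DataGraph σe σn) : PathExpr σe σn → ℕ → ℕ → Prop
  | .eps, v, w => v = w ∧ v ∈ G.V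
  | .label a, v, w => (v, a, w) ∈ G.E
  | .inv a, v, w => (w, a, v) ∈ G.E
  | .test ν, v, w => v = w ∧ nodeSem G ν v
  | .concat α β, v, w => ∃ u, pathSem G α v u ∧ pathSem G β u w
  | .union α β, v, w => pathSem G α v w ∨ pathSem G β v w
  | .inter α β, v, w => pathSem G α v w ∧ pathSem G β v w
  | .star α, v, w => v ∈ G.V ∧ w ∈ G.V ∧
      Relation.ReflTransGen (fun x y => pathSem G α x y) v w

def nodeSem {σe σn : Type} (G : DataGraph σe σn) : NodeExpr σe σn → ℕ → Prop
  | .eq c, v => v ∈ G.V ∧ G.D v = c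
  | .ne c, v => v ∈ G.V ∧ G.D v ≠ c
  | .and ν ν', v => nodeSem G ν v ∧ nodeSem G ν' v
  | .or ν ν', v => nodeSem G ν v ∨ nodeSem G ν' v
  | .ex α, v => ∃ w, pathSem G α v w
  | .exEq α β, v => ∃ w u, pathSem G α v w ∧ pathSem G β v u ∧ G.D w = G.D u
  | .exNe α β, v => ∃ w u, pathSem G α v w ∧ pathSem G β v u ∧ G.D w ≠ G.D u
end

/-- `chainAux j k` is the path expression `[=k]·down·[=k+1]·…·down·[=k+j]`, so that
`chainAux (n-1) 1` is `[=1]·down·[=2]·…·down·[=n]` (the single edge label `down` is `()`). -/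
def chainAux : ℕ → ℕ → PathExpr Unit ℕ
  | 0, k => .test (.eq k)
  | j + 1, k => .concat (.test (.eq k)) (.concat (.label ()) (chainAux j (k + 1)))


lemma chain_iff (n : ℕ) (E : Fin n → Fin n → Prop) (D' : ℕ → ℕ) :
    ∀ (j k : ℕ) (a : Fin n),
    (∃ b, pathSem
        (⟨{k | k < n}, {e | ∃ x y : Fin n, E x y ∧ e = (x.val, (), y.val)}, D'⟩ :
          DataGraph Unit ℕ) (chainAux j k) a.val b) ↔
    ∃ l : List (Fin n), l.length = j + 1 ∧ l.head? = some a ∧ l.Chain' E ∧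
      ∀ i (hi : i < l.length), D' (l.get ⟨i, hi⟩).val = k + i := by
  intro j
  induction j with
  | zero =>
    intro k a
    constructor
    · rintro ⟨b, hb, hV, hD⟩
      exact ⟨[a], rfl, rfl, List.isChain_singleton a, by
        intro i hi
        obtain rfl : i = 0 := by simp at hi; omega
        simpa using hD⟩
    · rintro ⟨l, hlen, hhead, _, hD⟩
      refine ⟨a.val, rfl, a.isLt, ?_⟩
      obtain ⟨x, t, rfl⟩ : ∃ x t, l = x :: t := by
        cases l with
        | nil => simp at hhead
        | cons x t => exact ⟨x, t, rfl⟩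
      simp at hhead
      have := hD 0 (by simp)
      simpa [hhead] using this
  | succ j ih =>
    intro k a
    constructor
    · rintro ⟨b, u, ⟨rfl, hV, hD⟩, u', ⟨x, y, hxy, hx⟩, hrest⟩
      obtain ⟨hx1, hx2⟩ : a.val = x.val ∧ u' = y.val := by
        simpa [Prod.ext_iff] using hx
      have hax : a = x := Fin.ext hx1
      subst hax
      subst hx2
      obtain ⟨l, hlen, hhead, hchain, hDl⟩ := (ih (k+1) y).mp ⟨b, hrest⟩
      refine ⟨a :: l, by simp [hlen], rfl, ?_, ?_⟩
      · cases l with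
        | nil => simp at hlen
        | cons z t =>
          simp at hhead
          subst hhead
          exact List.IsChain.cons_cons hxy hchain
      · intro i hi
        cases i with
        | zero => simpa using hD
        | succ i =>
          have := hDl i (by simpa using hi)
          simp only [List.get_cons_succ]
          rw [show k + (i+1) = k + 1 + i by omega]
          exact this
    · rintro ⟨l, hlen, hhead, hchain, hDl⟩
      obtain ⟨x, t, rfl⟩ : ∃ x t, l = x :: t := by
        cases l with
        | nil => simp at hhead
        | cons x t => exact ⟨x, t, rfl⟩
      simp at hhead
      obtain rfl : a = x := hhead.symm
      obtain ⟨y, t', rfl⟩ : ∃ y t', t = y :: t' := by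
        cases t with
        | nil => simp at hlen
        | cons y t' => exact ⟨y, t', rfl⟩
      have hchain' := (List.isChain_cons_cons.mp hchain)
      have hD0 := hDl 0 (by simp)
      have hrest : ∃ b, pathSem
          (⟨{k | k < n}, {e | ∃ x y : Fin n, E x y ∧ e = (x.val, (), y.val)}, D'⟩ :
            DataGraph Unit ℕ) (chainAux j (k+1)) y.val b := by
        refine (ih (k+1) y).mpr ⟨y :: t', by simpa using hlen, rfl, hchain'.2, ?_⟩
        intro i hi
        have := hDl (i+1) (by simpa using hi)
        simp only [List.get_cons_succ] at this
        rw [show k + 1 + i = k + (i+1) by omega]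
        exact this
      obtain ⟨b, hb⟩ := hrest
      exact ⟨b, a.val, ⟨rfl, a.isLt, by simpa using hD0⟩, y.val,
        ⟨a, y, hchain'.1, rfl⟩, hb⟩

/-- Let `(V, E)` be a finite directed graph on `Fin n` with distinguished
vertex `v`.  Build the data-graph on nodes `{0,…,n−1}` whose `down`-edges are the edges of
`E`.  Then some data function `D' : ℕ → ℕ` makes the node expression
`⟨[=1]·down·[=2]·…·down·[=n]⟩` hold at `v` iff the graph has a Hamiltonian path starting
at `v`. -/
theorem stmt_19 (n : ℕ) (hn : 0 < n) (E : Fin n → Fin n → Prop) (v : Fin n) :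
    (∃ D' : ℕ → ℕ,
      nodeSem
        ⟨{k | k < n},
         {e | ∃ x y : Fin n, E x y ∧ e = (x.val, (), y.val)},
         D'⟩
        (.ex (chainAux (n - 1) 1)) v.val) ↔
    (∃ l : List (Fin n), l.Nodup ∧ l.length = n ∧ l.head? = some v ∧
      l.Chain' (fun x y => E x y)) := by
  have key : ∀ D' : ℕ → ℕ,
      nodeSem (⟨{k | k < n}, {e | ∃ x y : Fin n, E x y ∧ e = (x.val, (), y.val)}, D'⟩ :
        DataGraph Unit ℕ) (.ex (chainAux (n - 1) 1)) v.val ↔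
      ∃ l : List (Fin n), l.length = n ∧ l.head? = some v ∧ l.Chain' E ∧
        ∀ i (hi : i < l.length), D' (l.get ⟨i, hi⟩).val = 1 + i := by
    intro D'
    have h := chain_iff n E D' (n - 1) 1 v
    rw [show nodeSem (⟨{k | k < n}, {e | ∃ x y : Fin n, E x y ∧ e = (x.val, (), y.val)}, D'⟩ :
        DataGraph Unit ℕ) (.ex (chainAux (n - 1) 1)) v.val =
        ∃ b, pathSem (⟨{k | k < n}, {e | ∃ x y : Fin n, E x y ∧ e = (x.val, (), y.val)}, D'⟩ :
        DataGraph Unit ℕ) (chainAux (n - 1) 1) v.val b from rfl, h,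
      Nat.sub_add_cancel hn]
  constructor
  · rintro ⟨D', hD'⟩
    obtain ⟨l, hlen, hhead, hchain, hDl⟩ := (key D').mp hD'
    refine ⟨l, ?_, hlen, hhead, hchain⟩
    rw [List.nodup_iff_injective_get]
    intro i j hij
    have h1 : D' (l.get i).val = 1 + i.val := hDl i.val i.isLt
    have h2 : D' (l.get j).val = 1 + j.val := hDl j.val j.isLt
    have : (1 : ℕ) + i.val = 1 + j.val := by rw [← h1, ← h2, hij]
    exact Fin.ext (by omega)
  · rintro ⟨l, hnd, hlen, hhead, hchain⟩
    refine ⟨fun x => 1 + (l.map Fin.val).idxOf x, (key _).mpr ⟨l, hlen, hhead, hchain, ?_⟩⟩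
    intro i hi
    congr 1
    have hnd' : (l.map Fin.val).Nodup := hnd.map Fin.val_injective
    have hget : (l.get ⟨i, hi⟩).val = (l.map Fin.val).get ⟨i, by simpa using hi⟩ := by
      simp
    rw [hget]
    exact List.get_idxOf hnd' _
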